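/- Let X and Y be topological spaces, D_X ⊆ X and D_Y ⊆ Y closed discrete subsets, and φ : Y → X an injection such that φ[Y \ D_Y] = D_X and φ[Y] is dense in X. Suppose X is metrizable, Y is metrizable, and that X and Y are perfectly normal and collectionwise normal. Then the space ⟨X, σ(τ_X, τ_Y, φ)⟩ is perfectly normal, i.e., it is normal and every closed subset of ⟨X, σ(τ_X, τ_Y, φ)⟩ is a countable intersection of open sets. -/

import Mathlib

open Set Topology

universe u v

/-- The topology σ(τ_X, τ_Y, φ): open sets of X whose φ-preimage is open in Y. -/
def sigmaTop {X : Type*} {Y : Type*} (tX : TopologicalSpace X) (tY : TopologicalSpace Y)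
    (φ : Y → X) : TopologicalSpace X where
  IsOpen U := tX.IsOpen U ∧ tY.IsOpen (φ ⁻¹' U)
  isOpen_univ := ⟨tX.isOpen_univ, by simpa using tY.isOpen_univ⟩
  isOpen_inter U V hU hV :=
    ⟨tX.isOpen_inter U V hU.1 hV.1, by
      rw [Set.preimage_inter]
      exact tY.isOpen_inter _ _ hU.2 hV.2⟩
  isOpen_sUnion s hs :=
    ⟨tX.isOpen_sUnion s fun U hU => (hs U hU).1, by
      rw [Set.preimage_sUnion]
      exact @isOpen_biUnion _ _ tY _ _ fun U hU => (hs U hU).2⟩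

/-- A set is closed discrete: closed, and its subspace topology is discrete. -/
def ClosedDiscrete {X : Type*} (t : TopologicalSpace X) (D : Set X) : Prop :=
  @IsClosed X t D ∧ @DiscreteTopology D (TopologicalSpace.induced (Subtype.val : D → X) t)

/-- A family of sets is discrete: every point has a neighborhood meeting
at most one member of the family. -/
def DiscreteFamily {X : Type*} {A : Type*} (t : TopologicalSpace X) (F : A → Set X) : Prop :=
  ∀ x : X, ∃ U, t.IsOpen U ∧ x ∈ U ∧ {α | (F α ∩ U).Nonempty}.Subsingleton

/-- A space is collectionwise normal: normal, and every discrete family of pairwise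
disjoint closed sets can be separated by a pairwise disjoint family of open sets. -/
def CollectionwiseNormal {X : Type u} (t : TopologicalSpace X) : Prop :=
  @NormalSpace X t ∧
    ∀ {A : Type u} (F : A → Set X), DiscreteFamily t F → (∀ α, @IsClosed X t (F α)) →
      Pairwise (Function.onFun Disjoint F) →
      ∃ U : A → Set X, (∀ α, t.IsOpen (U α)) ∧ Pairwise (Function.onFun Disjoint U) ∧
        ∀ α, F α ⊆ U α


section Aux

open Classical in
noncomputable def sdistm {α : Type*} [PseudoMetricSpace α] (S : Set α) (x : α) : ℝ :=
  if S.Nonempty then Metric.infDist x S else 1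

variable {α : Type*} [MetricSpace α]

lemma sdistm_nonneg (S : Set α) (x : α) : 0 ≤ sdistm S x := by
  unfold sdistm; split
  · exact Metric.infDist_nonneg
  · norm_num

lemma sdistm_le {S : Set α} {t : α} (x : α) (ht : t ∈ S) : sdistm S x ≤ dist x t := by
  unfold sdistm
  rw [if_pos ⟨t, ht⟩]
  exact Metric.infDist_le_dist_of_mem ht

lemma sdistm_pos {S : Set α} (hS : IsClosed S) {x : α} (hx : x ∉ S) : 0 < sdistm S x := by
  unfold sdistm; split
  · next h => exact (hS.notMem_iff_infDist_pos h).1 hx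
  · norm_num

lemma ball_avoid {S : Set α} {c : α} {ρ : ℝ} (h : ρ ≤ sdistm S c / 3) :
    ∀ z ∈ Metric.ball c ρ, z ∉ S := by
  intro z hz hzS
  have h1 := sdistm_le c hzS
  have h2 : dist z c < ρ := Metric.mem_ball.mp hz
  rw [dist_comm] at h1
  nlinarith [sdistm_nonneg S c]

lemma ball_kernel {c t : α} (hct : c ≠ t) {ρc ρt dc dt : ℝ}
    (h1 : ρc ≤ dc / 3) (h2 : dc ≤ dist c t) (h3 : ρt ≤ dt / 3) (h4 : dt ≤ dist c t) :
    ∀ z, z ∈ Metric.ball c ρc → z ∉ Metric.ball t ρt := by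
  intro z hzc hzt
  have hc : dist z c < ρc := Metric.mem_ball.mp hzc
  have ht' : dist z t < ρt := Metric.mem_ball.mp hzt
  have htri : dist c t ≤ dist c z + dist z t := dist_triangle _ _ _
  have hpos : 0 < dist c t := dist_pos.mpr hct
  rw [dist_comm c z] at htri
  linarith

/-- Isolation property of a closed discrete set in a metric space. -/
def IsoProp (D : Set α) : Prop := ∀ d ∈ D, ∃ ε > 0, ∀ x ∈ D, dist x d < ε → x = d

lemma isClosed_subset_cd {D : Set α} (hD : IsClosed D) (hiso : IsoProp D)
    {S : Set α} (hS : S ⊆ D) : IsClosed S := by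
  rw [← isOpen_compl_iff, Metric.isOpen_iff]
  intro x hx
  by_cases hxD : x ∈ D
  · obtain ⟨ε, hε, h⟩ := hiso x hxD
    exact ⟨ε, hε, fun z hz hzS => hx (h z (hS hzS) (Metric.mem_ball.mp hz) ▸ hzS)⟩
  · obtain ⟨ε, hε, h⟩ := Metric.isOpen_iff.mp hD.isOpen_compl x hxD
    exact ⟨ε, hε, fun z hz hzS => (h hz) (hS hzS)⟩

noncomputable def punct (D : Set α) (x : α) : ℝ := sdistm (D \ {x}) x

lemma punct_pos {D : Set α} (hD : IsClosed D) (hiso : IsoProp D) (x : α) : 0 < punct D x :=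
  sdistm_pos (isClosed_subset_cd hD hiso diff_subset) (fun h => h.2 rfl)

lemma punct_le {D : Set α} {x t : α} (ht : t ∈ D) (hne : t ≠ x) : punct D x ≤ dist x t :=
  sdistm_le x ⟨ht, hne⟩

end Aux
section Cascade

variable {X : Type u} {Y : Type v} [MetricSpace X] [MetricSpace Y]
variable (φ : Y → X) (DY : Set Y) (F : Set X) (E : Set Y) (rX : X → ℝ) (rY : Y → ℝ)

/-- The cascade of open sets generated by `F` (in `X`) and `E` (in `Y`). -/
def casc : ℕ → Set X × Set Y
  | 0 => (⋃ x ∈ F, Metric.ball x (rX x), ⋃ e ∈ E, Metric.ball e (rY e))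
  | n + 1 =>
    ((casc n).1 ∪ ⋃ s ∈ φ '' ((casc n).2 \ DY), Metric.ball s (rX s),
     (casc n).2 ∪ ⋃ p ∈ DY ∩ φ ⁻¹' (casc n).1, Metric.ball p (rY p))

def cUU : Set X := ⋃ n, (casc φ DY F E rX rY n).1

def cOO : Set Y := ⋃ n, (casc φ DY F E rX rY n).2

/-- The σ-open set produced by the cascade. -/
def cW : Set X :=
  cUU φ DY F E rX rY \ φ '' ((φ ⁻¹' (cUU φ DY F E rX rY) \ DY) \ cOO φ DY F E rX rY)

lemma casc_isOpen : ∀ n, IsOpen (casc φ DY F E rX rY n).1 ∧ IsOpen (casc φ DY F E rX rY n).2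
  | 0 => ⟨isOpen_biUnion fun _ _ => Metric.isOpen_ball,
          isOpen_biUnion fun _ _ => Metric.isOpen_ball⟩
  | n + 1 => ⟨((casc_isOpen n).1).union (isOpen_biUnion fun _ _ => Metric.isOpen_ball),
          ((casc_isOpen n).2).union (isOpen_biUnion fun _ _ => Metric.isOpen_ball)⟩

lemma cUU_isOpen : IsOpen (cUU φ DY F E rX rY) :=
  isOpen_iUnion fun n => (casc_isOpen φ DY F E rX rY n).1

lemma cOO_isOpen : IsOpen (cOO φ DY F E rX rY) :=
  isOpen_iUnion fun n => (casc_isOpen φ DY F E rX rY n).2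

lemma casc_subset_cUU (n : ℕ) : (casc φ DY F E rX rY n).1 ⊆ cUU φ DY F E rX rY :=
  subset_iUnion (fun n => (casc φ DY F E rX rY n).1) n

lemma casc_subset_cOO (n : ℕ) : (casc φ DY F E rX rY n).2 ⊆ cOO φ DY F E rX rY :=
  subset_iUnion (fun n => (casc φ DY F E rX rY n).2) n

lemma casc_cover1 : ∀ n, (casc φ DY F E rX rY n).1 ⊆
    ⋃ c ∈ F ∪ φ '' (cOO φ DY F E rX rY \ DY), Metric.ball c (rX c)
  | 0 => biUnion_subset_biUnion_left subset_union_left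
  | n + 1 => by
      apply union_subset (casc_cover1 n)
      apply biUnion_subset_biUnion_left
      exact subset_union_right.trans'
        (image_mono (f := φ) (diff_subset_diff_left (casc_subset_cOO φ DY F E rX rY n)))

lemma casc_cover2 : ∀ n, (casc φ DY F E rX rY n).2 ⊆
    ⋃ c ∈ E ∪ DY ∩ φ ⁻¹' (cUU φ DY F E rX rY), Metric.ball c (rY c)
  | 0 => biUnion_subset_biUnion_left subset_union_left
  | n + 1 => by
      apply union_subset (casc_cover2 n)
      apply biUnion_subset_biUnion_left
      exact subset_union_right.trans'
        (inter_subset_inter_right DY (preimage_mono (casc_subset_cUU φ DY F E rX rY n)))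

lemma cUU_cover : cUU φ DY F E rX rY ⊆
    ⋃ c ∈ F ∪ φ '' (cOO φ DY F E rX rY \ DY), Metric.ball c (rX c) :=
  iUnion_subset (casc_cover1 φ DY F E rX rY)

lemma cOO_cover : cOO φ DY F E rX rY ⊆
    ⋃ c ∈ E ∪ DY ∩ φ ⁻¹' (cUU φ DY F E rX rY), Metric.ball c (rY c) :=
  iUnion_subset (casc_cover2 φ DY F E rX rY)

lemma cUU_avoid {S : Set X} (h : ∀ c, rX c ≤ sdistm S c / 3) :
    ∀ z ∈ cUU φ DY F E rX rY, z ∉ S := by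
  intro z hz
  obtain ⟨c, _, hball⟩ := mem_iUnion₂.mp (cUU_cover φ DY F E rX rY hz)
  exact ball_avoid (h c) z hball

lemma cOO_avoid {S : Set Y} (h : ∀ c, rY c ≤ sdistm S c / 3) :
    ∀ z ∈ cOO φ DY F E rX rY, z ∉ S := by
  intro z hz
  obtain ⟨c, _, hball⟩ := mem_iUnion₂.mp (cOO_cover φ DY F E rX rY hz)
  exact ball_avoid (h c) z hball

lemma subset_cUU (h : ∀ x ∈ F, 0 < rX x) : F ⊆ cUU φ DY F E rX rY := fun x hx =>
  mem_iUnion.mpr ⟨0, mem_biUnion hx (Metric.mem_ball_self (h x hx))⟩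

lemma subset_cOO (h : ∀ e ∈ E, 0 < rY e) : E ⊆ cOO φ DY F E rX rY := fun e he =>
  mem_iUnion.mpr ⟨0, mem_biUnion he (Metric.mem_ball_self (h e he))⟩

lemma cT2 (h : ∀ y ∈ cOO φ DY F E rX rY, y ∉ DY → 0 < rX (φ y)) :
    ∀ y ∈ cOO φ DY F E rX rY, y ∉ DY → φ y ∈ cUU φ DY F E rX rY := by
  intro y hy hyD
  obtain ⟨n, hn⟩ := mem_iUnion.mp hy
  refine mem_iUnion.mpr ⟨n + 1, subset_union_right ?_⟩
  exact mem_biUnion (mem_image_of_mem φ ⟨hn, hyD⟩) (Metric.mem_ball_self (h y hy hyD))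

lemma cT1 (h : ∀ p ∈ DY, φ p ∈ cUU φ DY F E rX rY → 0 < rY p) :
    ∀ p ∈ DY, φ p ∈ cUU φ DY F E rX rY → p ∈ cOO φ DY F E rX rY := by
  intro p hp hfp
  obtain ⟨n, hn⟩ := mem_iUnion.mp hfp
  refine mem_iUnion.mpr ⟨n + 1, subset_union_right ?_⟩
  exact mem_biUnion ⟨hp, hn⟩ (Metric.mem_ball_self (h p hp hfp))

lemma cW_subset : cW φ DY F E rX rY ⊆ cUU φ DY F E rX rY := diff_subset

lemma cW_preimage (hinj : Function.Injective φ)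
    (hT1 : ∀ p ∈ DY, φ p ∈ cUU φ DY F E rX rY → p ∈ cOO φ DY F E rX rY)
    (hT2 : ∀ y ∈ cOO φ DY F E rX rY, y ∉ DY → φ y ∈ cUU φ DY F E rX rY) :
    φ ⁻¹' (cW φ DY F E rX rY) =
      cOO φ DY F E rX rY \ (DY \ φ ⁻¹' (cUU φ DY F E rX rY)) := by
  have hsimp : φ ⁻¹' (cW φ DY F E rX rY) =
      φ ⁻¹' (cUU φ DY F E rX rY) \ ((φ ⁻¹' (cUU φ DY F E rX rY) \ DY) \ cOO φ DY F E rX rY) := by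
    rw [cW, preimage_diff, hinj.preimage_image]
  rw [hsimp]
  ext z
  constructor
  · rintro ⟨hzU, hzr⟩
    by_cases hzD : z ∈ DY
    · exact ⟨hT1 z hzD hzU, fun h => h.2 hzU⟩
    · by_cases hzO : z ∈ cOO φ DY F E rX rY
      · exact ⟨hzO, fun h => hzD h.1⟩
      · exact absurd ⟨⟨hzU, hzD⟩, hzO⟩ hzr
  · rintro ⟨hzO, hzn⟩
    by_cases hzD : z ∈ DY
    · have hzU : z ∈ φ ⁻¹' (cUU φ DY F E rX rY) := by
        by_contra h; exact hzn ⟨hzD, h⟩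
      exact ⟨hzU, fun h => h.1.2 hzD⟩
    · exact ⟨hT2 z hzO hzD, fun h => h.2 hzO⟩

lemma cW_isOpen {DX : Set X} (himg : φ '' DYᶜ = DX)
    (hDXc : IsClosed DX) (hDXi : IsoProp DX) :
    IsOpen (cW φ DY F E rX rY) := by
  apply (cUU_isOpen φ DY F E rX rY).sdiff
  apply isClosed_subset_cd hDXc hDXi
  refine (image_mono (f := φ) ?_).trans himg.subset
  exact fun z hz => hz.1.2

lemma cW_preimage_isOpen (hinj : Function.Injective φ)
    (hDYc : IsClosed DY) (hDYi : IsoProp DY)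
    (hT1 : ∀ p ∈ DY, φ p ∈ cUU φ DY F E rX rY → p ∈ cOO φ DY F E rX rY)
    (hT2 : ∀ y ∈ cOO φ DY F E rX rY, y ∉ DY → φ y ∈ cUU φ DY F E rX rY) :
    IsOpen (φ ⁻¹' (cW φ DY F E rX rY)) := by
  rw [cW_preimage φ DY F E rX rY hinj hT1 hT2]
  exact (cOO_isOpen φ DY F E rX rY).sdiff (isClosed_subset_cd hDYc hDYi diff_subset)

lemma subset_cW (hE : E = φ ⁻¹' F) (hF : ∀ x ∈ F, 0 < rX x) (hEpos : ∀ e ∈ E, 0 < rY e) :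
    F ⊆ cW φ DY F E rX rY := by
  intro x hx
  refine ⟨subset_cUU φ DY F E rX rY hF hx, ?_⟩
  rintro ⟨y, ⟨⟨-, -⟩, hyO⟩, rfl⟩
  exact hyO (subset_cOO φ DY F E rX rY hEpos (by rw [hE]; exact hx))

end Cascade

section Main

variable {X : Type u} {Y : Type v} [MetricSpace X] [MetricSpace Y]

theorem normal_part (DX : Set X) (DY : Set Y) (φ : Y → X)
    (hDXc : IsClosed DX) (hDXi : IsoProp DX)
    (hDYc : IsClosed DY) (hDYi : IsoProp DY)
    (hinj : Function.Injective φ) (himg : φ '' DYᶜ = DX)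
    (F₀ F₁ : Set X) (h₀ : IsClosed F₀) (h₁ : IsClosed F₁)
    (hp₀ : IsClosed (φ ⁻¹' F₀)) (hp₁ : IsClosed (φ ⁻¹' F₁))
    (hdisj : Disjoint F₀ F₁) :
    ∃ A W : Set X, (IsOpen A ∧ IsOpen (φ ⁻¹' A)) ∧ (IsOpen W ∧ IsOpen (φ ⁻¹' W)) ∧
      F₀ ⊆ A ∧ F₁ ⊆ W ∧ Disjoint A W := by
  classical
  set E₀ := φ ⁻¹' F₀ with hE₀def
  set E₁ := φ ⁻¹' F₁ with hE₁def
  have hdisjE : Disjoint E₀ E₁ := hdisj.preimage φ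
  have hpunctX : ∀ c, 0 < punct DX c := punct_pos hDXc hDXi
  have hpunctY : ∀ c, 0 < punct DY c := punct_pos hDYc hDYi
  -- side 1 radii
  set rX1 : X → ℝ := fun c => min (punct DX c) (sdistm F₀ c) / 3 with hrX1def
  set rY1 : Y → ℝ := fun p => min (punct DY p) (sdistm E₀ p) / 3 with hrY1def
  have hrX1v : ∀ c, rX1 c = min (punct DX c) (sdistm F₀ c) / 3 := fun c => by rw [hrX1def]
  have hrY1v : ∀ p, rY1 p = min (punct DY p) (sdistm E₀ p) / 3 := fun p => by rw [hrY1def]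
  set UU1 := cUU φ DY F₁ E₁ rX1 rY1 with hUU1def
  set OO1 := cOO φ DY F₁ E₁ rX1 rY1 with hOO1def
  have hAv1X : ∀ z ∈ UU1, z ∉ F₀ := cUU_avoid _ _ _ _ _ _ (fun c => by
    rw [hrX1v]; have := min_le_right (punct DX c) (sdistm F₀ c); linarith)
  have hAv1Y : ∀ z ∈ OO1, z ∉ E₀ := cOO_avoid _ _ _ _ _ _ (fun c => by
    rw [hrY1v]; have := min_le_right (punct DY c) (sdistm E₀ c); linarith)
  have hT1pos1 : ∀ p ∈ DY, φ p ∈ UU1 → 0 < rY1 p := by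
    intro p hp hfp
    rw [hrY1v]
    exact div_pos (lt_min (hpunctY p)
      (sdistm_pos hp₀ (fun hpE => hAv1X (φ p) hfp hpE))) (by norm_num)
  have hT2pos1 : ∀ y ∈ OO1, y ∉ DY → 0 < rX1 (φ y) := by
    intro y hy hyD
    rw [hrX1v]
    exact div_pos (lt_min (hpunctX _)
      (sdistm_pos h₀ (fun h => hAv1Y y hy h))) (by norm_num)
  have hT11 := cT1 φ DY F₁ E₁ rX1 rY1 hT1pos1
  have hT21 := cT2 φ DY F₁ E₁ rX1 rY1 hT2pos1
  have hpos1F : ∀ x ∈ F₁, 0 < rX1 x := by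
    intro x hx
    rw [hrX1v]
    exact div_pos (lt_min (hpunctX x)
      (sdistm_pos h₀ (disjoint_right.mp hdisj hx))) (by norm_num)
  have hpos1E : ∀ e ∈ E₁, 0 < rY1 e := by
    intro e he
    rw [hrY1v]
    exact div_pos (lt_min (hpunctY e)
      (sdistm_pos hp₀ (disjoint_right.mp hdisjE he))) (by norm_num)
  -- side 0 data
  set CX1 : Set X := F₁ ∪ φ '' (OO1 \ DY) with hCX1def
  set CY1 : Set Y := E₁ ∪ DY ∩ φ ⁻¹' UU1 with hCY1def
  have hCX1c : IsClosed CX1 := by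
    rw [hCX1def]
    exact h₁.union (isClosed_subset_cd hDXc hDXi
      ((image_mono (f := φ) (fun z hz => hz.2)).trans himg.subset))
  have hCY1c : IsClosed CY1 := by
    rw [hCY1def]
    exact hp₁.union (isClosed_subset_cd hDYc hDYi inter_subset_left)
  set rX0 : X → ℝ := fun c => min (punct DX c) (sdistm CX1 c) / 3 with hrX0def
  set rY0 : Y → ℝ := fun p => min (punct DY p) (sdistm CY1 p) / 3 with hrY0def
  have hrX0v : ∀ c, rX0 c = min (punct DX c) (sdistm CX1 c) / 3 := fun c => by rw [hrX0def]
  have hrY0v : ∀ p, rY0 p = min (punct DY p) (sdistm CY1 p) / 3 := fun p => by rw [hrY0def]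
  set UU0 := cUU φ DY F₀ E₀ rX0 rY0 with hUU0def
  set OO0 := cOO φ DY F₀ E₀ rX0 rY0 with hOO0def
  have hAv0X : ∀ z ∈ UU0, z ∉ CX1 := cUU_avoid _ _ _ _ _ _ (fun c => by
    rw [hrX0v]; have := min_le_right (punct DX c) (sdistm CX1 c); linarith)
  have hAv0Y : ∀ z ∈ OO0, z ∉ CY1 := cOO_avoid _ _ _ _ _ _ (fun c => by
    rw [hrY0v]; have := min_le_right (punct DY c) (sdistm CY1 c); linarith)
  have cover1X : UU1 ⊆ ⋃ c ∈ CX1, Metric.ball c (rX1 c) := cUU_cover φ DY F₁ E₁ rX1 rY1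
  have cover1Y : OO1 ⊆ ⋃ c ∈ CY1, Metric.ball c (rY1 c) := cOO_cover φ DY F₁ E₁ rX1 rY1
  -- separation of single balls from side 1
  have sepX : ∀ c, c ∉ CX1 → (c ∈ F₀ ∨ c ∈ DX) → ∀ z ∈ Metric.ball c (rX0 c), z ∉ UU1 := by
    intro c hc hcase z hzc hz1
    obtain ⟨t, ht, hzt⟩ := mem_iUnion₂.mp (cover1X hz1)
    have hct : c ≠ t := fun h => hc (h ▸ ht)
    have hdc : sdistm CX1 c ≤ dist c t := sdistm_le c ht
    have hρc : rX0 c ≤ sdistm CX1 c / 3 := by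
      rw [hrX0v]; have := min_le_right (punct DX c) (sdistm CX1 c); linarith
    rcases hcase with hcF | hcD
    · refine ball_kernel hct hρc hdc (show rX1 t ≤ sdistm F₀ t / 3 by
        rw [hrX1v]; have := min_le_right (punct DX t) (sdistm F₀ t); linarith)
        (by rw [dist_comm]; exact sdistm_le t hcF) z hzc hzt
    · refine ball_kernel hct hρc hdc (show rX1 t ≤ punct DX t / 3 by
        rw [hrX1v]; have := min_le_left (punct DX t) (sdistm F₀ t); linarith)
        (by rw [dist_comm]; exact punct_le hcD hct) z hzc hzt
  have sepY : ∀ c, c ∉ CY1 → (c ∈ E₀ ∨ c ∈ DY) → ∀ z ∈ Metric.ball c (rY0 c), z ∉ OO1 := by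
    intro c hc hcase z hzc hz1
    obtain ⟨t, ht, hzt⟩ := mem_iUnion₂.mp (cover1Y hz1)
    have hct : c ≠ t := fun h => hc (h ▸ ht)
    have hdc : sdistm CY1 c ≤ dist c t := sdistm_le c ht
    have hρc : rY0 c ≤ sdistm CY1 c / 3 := by
      rw [hrY0v]; have := min_le_right (punct DY c) (sdistm CY1 c); linarith
    rcases hcase with hcE | hcD
    · refine ball_kernel hct hρc hdc (show rY1 t ≤ sdistm E₀ t / 3 by
        rw [hrY1v]; have := min_le_right (punct DY t) (sdistm E₀ t); linarith)
        (by rw [dist_comm]; exact sdistm_le t hcE) z hzc hzt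
    · refine ball_kernel hct hρc hdc (show rY1 t ≤ punct DY t / 3 by
        rw [hrY1v]; have := min_le_left (punct DY t) (sdistm E₀ t); linarith)
        (by rw [dist_comm]; exact punct_le hcD hct) z hzc hzt
  -- the key induction
  have key : ∀ n, (∀ z ∈ (casc φ DY F₀ E₀ rX0 rY0 n).1, z ∉ UU1) ∧
      (∀ z ∈ (casc φ DY F₀ E₀ rX0 rY0 n).2, z ∉ OO1) := by
    intro n
    induction n with
    | zero =>
      constructor
      · intro z hz hz1
        simp only [casc] at hz
        obtain ⟨c, hcF, hball⟩ := mem_iUnion₂.mp hz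
        refine sepX c ?_ (Or.inl hcF) z hball hz1
        rintro (hcF₁ | ⟨y, hy, rfl⟩)
        · exact disjoint_left.mp hdisj hcF hcF₁
        · exact hAv1Y y hy.1 hcF
      · intro z hz hz1
        simp only [casc] at hz
        obtain ⟨c, hcE, hball⟩ := mem_iUnion₂.mp hz
        refine sepY c ?_ (Or.inl hcE) z hball hz1
        rintro (hcE₁ | ⟨hcD, hcU⟩)
        · exact disjoint_left.mp hdisjE hcE hcE₁
        · exact hAv1X (φ c) hcU hcE
    | succ n ih =>
      constructor
      · intro z hz hz1
        simp only [casc] at hz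
        rcases (mem_union _ _ _).mp hz with hz | hz
        · exact ih.1 z hz hz1
        · obtain ⟨c, ⟨y, hy, rfl⟩, hball⟩ := mem_iUnion₂.mp hz
          have hyO0 : y ∈ OO0 := casc_subset_cOO φ DY F₀ E₀ rX0 rY0 n hy.1
          have hcD : φ y ∈ DX := himg ▸ mem_image_of_mem φ hy.2
          refine sepX _ ?_ (Or.inr hcD) z hball hz1
          rintro (h1 | ⟨y', hy', heq⟩)
          · exact hAv0Y y hyO0 (Or.inl h1)
          · exact ih.2 y hy.1 (hinj heq ▸ hy'.1)
      · intro z hz hz1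
        simp only [casc] at hz
        rcases (mem_union _ _ _).mp hz with hz | hz
        · exact ih.2 z hz hz1
        · obtain ⟨p, hp, hball⟩ := mem_iUnion₂.mp hz
          have hpU0 : φ p ∈ UU0 := casc_subset_cUU φ DY F₀ E₀ rX0 rY0 n hp.2
          refine sepY _ ?_ (Or.inr hp.1) z hball hz1
          rintro (h1 | ⟨-, hpU1⟩)
          · exact hAv0X (φ p) hpU0 (Or.inl h1)
          · exact ih.1 (φ p) hp.2 hpU1
  have hU01 : ∀ z ∈ UU0, z ∉ UU1 := by
    intro z hz
    obtain ⟨n, hn⟩ := mem_iUnion.mp hz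
    exact (key n).1 z hn
  have hO01 : ∀ z ∈ OO0, z ∉ OO1 := by
    intro z hz
    obtain ⟨n, hn⟩ := mem_iUnion.mp hz
    exact (key n).2 z hn
  -- positivity for side 0
  have hT1pos0 : ∀ p ∈ DY, φ p ∈ UU0 → 0 < rY0 p := by
    intro p hp hfp
    rw [hrY0v]
    refine div_pos (lt_min (hpunctY p) (sdistm_pos hCY1c ?_)) (by norm_num)
    rintro (hpE1 | ⟨-, hpU1⟩)
    · exact hAv0X (φ p) hfp (Or.inl hpE1)
    · exact hU01 (φ p) hfp hpU1
  have hT2pos0 : ∀ y ∈ OO0, y ∉ DY → 0 < rX0 (φ y) := by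
    intro y hy hyD
    rw [hrX0v]
    refine div_pos (lt_min (hpunctX _) (sdistm_pos hCX1c ?_)) (by norm_num)
    rintro (h1 | ⟨y', hy', heq⟩)
    · exact hAv0Y y hy (Or.inl h1)
    · exact hO01 y hy (hinj heq ▸ hy'.1)
  have hT10 := cT1 φ DY F₀ E₀ rX0 rY0 hT1pos0
  have hT20 := cT2 φ DY F₀ E₀ rX0 rY0 hT2pos0
  have hpos0F : ∀ x ∈ F₀, 0 < rX0 x := by
    intro x hx
    rw [hrX0v]
    refine div_pos (lt_min (hpunctX x) (sdistm_pos hCX1c ?_)) (by norm_num)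
    rintro (hxF₁ | ⟨y, hy, rfl⟩)
    · exact disjoint_left.mp hdisj hx hxF₁
    · exact hAv1Y y hy.1 hx
  have hpos0E : ∀ e ∈ E₀, 0 < rY0 e := by
    intro e he
    rw [hrY0v]
    refine div_pos (lt_min (hpunctY e) (sdistm_pos hCY1c ?_)) (by norm_num)
    rintro (heE₁ | ⟨-, hU1⟩)
    · exact disjoint_left.mp hdisjE he heE₁
    · exact hAv1X (φ e) hU1 he
  -- assemble
  refine ⟨cW φ DY F₀ E₀ rX0 rY0, cW φ DY F₁ E₁ rX1 rY1,
    ⟨cW_isOpen φ DY F₀ E₀ rX0 rY0 himg hDXc hDXi,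
     cW_preimage_isOpen φ DY F₀ E₀ rX0 rY0 hinj hDYc hDYi hT10 hT20⟩,
    ⟨cW_isOpen φ DY F₁ E₁ rX1 rY1 himg hDXc hDXi,
     cW_preimage_isOpen φ DY F₁ E₁ rX1 rY1 hinj hDYc hDYi hT11 hT21⟩,
    subset_cW φ DY F₀ E₀ rX0 rY0 hE₀def hpos0F hpos0E,
    subset_cW φ DY F₁ E₁ rX1 rY1 hE₁def hpos1F hpos1E, ?_⟩
  exact Set.disjoint_left.mpr fun {a} ha hb =>
    hU01 a (cW_subset φ DY F₀ E₀ rX0 rY0 ha) (cW_subset φ DY F₁ E₁ rX1 rY1 hb)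

theorem gdelta_part (DX : Set X) (DY : Set Y) (φ : Y → X)
    (hDXc : IsClosed DX) (hDXi : IsoProp DX)
    (hDYc : IsClosed DY) (hDYi : IsoProp DY)
    (hinj : Function.Injective φ) (himg : φ '' DYᶜ = DX)
    (F : Set X) (hFc : IsClosed F) (hFpc : IsClosed (φ ⁻¹' F)) :
    ∃ G : ℕ → Set X, (∀ n, IsOpen (G n) ∧ IsOpen (φ ⁻¹' (G n))) ∧ F = ⋂ n, G n := by
  classical
  set E := φ ⁻¹' F with hEdef
  have hpunctX : ∀ c, 0 < punct DX c := punct_pos hDXc hDXi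
  have hpunctY : ∀ c, 0 < punct DY c := punct_pos hDYc hDYi
  set rXn : ℕ → X → ℝ := fun n c => min (1 / ((n : ℝ) + 1)) (punct DX c) / 3 with hrXndef
  set rYn : ℕ → Y → ℝ := fun n p => min (1 / ((n : ℝ) + 1)) (punct DY p) / 3 with hrYndef
  have hrXnv : ∀ n c, rXn n c = min (1 / ((n : ℝ) + 1)) (punct DX c) / 3 := fun n c => by
    rw [hrXndef]
  have hrYnv : ∀ n p, rYn n p = min (1 / ((n : ℝ) + 1)) (punct DY p) / 3 := fun n p => by
    rw [hrYndef]
  have hposX : ∀ n c, 0 < rXn n c := fun n c => by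
    rw [hrXnv]
    exact div_pos (lt_min (by positivity) (hpunctX c)) (by norm_num)
  have hposY : ∀ n p, 0 < rYn n p := fun n p => by
    rw [hrYnv]
    exact div_pos (lt_min (by positivity) (hpunctY p)) (by norm_num)
  have hT1 : ∀ n, ∀ p ∈ DY, φ p ∈ cUU φ DY F E (rXn n) (rYn n) →
      p ∈ cOO φ DY F E (rXn n) (rYn n) := fun n =>
    cT1 φ DY F E (rXn n) (rYn n) (fun p hp _ => hposY n p)
  have hT2 : ∀ n, ∀ y ∈ cOO φ DY F E (rXn n) (rYn n), y ∉ DY →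
      φ y ∈ cUU φ DY F E (rXn n) (rYn n) := fun n =>
    cT2 φ DY F E (rXn n) (rYn n) (fun y _ _ => hposX n (φ y))
  refine ⟨fun n => cW φ DY F E (rXn n) (rYn n), fun n =>
    ⟨cW_isOpen φ DY F E (rXn n) (rYn n) himg hDXc hDXi,
     cW_preimage_isOpen φ DY F E (rXn n) (rYn n) hinj hDYc hDYi (hT1 n) (hT2 n)⟩, ?_⟩
  apply Subset.antisymm
  · exact subset_iInter fun n =>
      subset_cW φ DY F E (rXn n) (rYn n) hEdef (fun x _ => hposX n x) (fun e _ => hposY n e)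
  · intro x hx
    by_contra hxF
    obtain ⟨ε₁, hε₁, hball₁⟩ := Metric.isOpen_iff.mp (isOpen_compl_iff.mpr hFc) x hxF
    have hxU : ∀ n, x ∈ cUU φ DY F E (rXn n) (rYn n) := fun n =>
      cW_subset φ DY F E (rXn n) (rYn n) (mem_iInter.mp hx n)
    by_cases hxD : x ∈ DX
    · obtain ⟨y₀, hy₀D, hy₀⟩ : ∃ y₀, y₀ ∈ DYᶜ ∧ φ y₀ = x := by
        have : x ∈ φ '' DYᶜ := by rw [himg]; exact hxD
        obtain ⟨y₀, h1, h2⟩ := this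
        exact ⟨y₀, h1, h2⟩
      have hy₀E : y₀ ∉ E := fun h => hxF (show x ∈ F from hy₀ ▸ h)
      obtain ⟨ε₂, hε₂, hball₂⟩ := Metric.isOpen_iff.mp (isOpen_compl_iff.mpr hFpc) y₀ hy₀E
      obtain ⟨ε₃, hε₃, hball₃⟩ := Metric.isOpen_iff.mp (isOpen_compl_iff.mpr hDYc) y₀ hy₀D
      have hεpos : (0 : ℝ) < min (min ε₂ ε₃) ε₁ := lt_min (lt_min hε₂ hε₃) hε₁
      obtain ⟨n, hn⟩ := exists_nat_one_div_lt hεpos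
      obtain ⟨c, hc, hball⟩ := mem_iUnion₂.mp (cUU_cover φ DY F E (rXn n) (rYn n) (hxU n))
      have hdx : dist x c < rXn n c := Metric.mem_ball.mp hball
      rw [hrXnv] at hdx
      have hd1 : dist x c < 1 / ((n : ℝ) + 1) / 3 := by
        have := min_le_left (1 / ((n : ℝ) + 1)) (punct DX c); linarith
      have hd2 : dist x c < punct DX c / 3 := by
        have := min_le_right (1 / ((n : ℝ) + 1)) (punct DX c); linarith
      rcases hc with hcF | ⟨y, hyO, rfl⟩
      · refine hball₁ (Metric.mem_ball.mpr ?_) hcF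
        rw [dist_comm]
        have h3 : (0:ℝ) < 1 / ((n : ℝ) + 1) := by positivity
        have := min_le_right (min ε₂ ε₃) ε₁
        linarith
      · rcases eq_or_ne (φ y) x with hyx | hyx
        · have hyy₀ : y = y₀ := hinj (hyx.trans hy₀.symm)
          have hyO' : y₀ ∈ cOO φ DY F E (rXn n) (rYn n) := hyy₀ ▸ hyO.1
          obtain ⟨c', hc', hb'⟩ := mem_iUnion₂.mp (cOO_cover φ DY F E (rXn n) (rYn n) hyO')
          have hdy : dist y₀ c' < rYn n c' := Metric.mem_ball.mp hb'
          rw [hrYnv] at hdy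
          have hd1' : dist y₀ c' < 1 / ((n : ℝ) + 1) / 3 := by
            have := min_le_left (1 / ((n : ℝ) + 1)) (punct DY c'); linarith
          have h3 : (0:ℝ) < 1 / ((n : ℝ) + 1) := by positivity
          have hm1 := min_le_left (min ε₂ ε₃) ε₁
          have hm2 := min_le_left ε₂ ε₃
          have hm3 := min_le_right ε₂ ε₃
          rcases hc' with hcE | hcD
          · refine hball₂ (Metric.mem_ball.mpr ?_) hcE
            rw [dist_comm]; linarith
          · refine hball₃ (Metric.mem_ball.mpr ?_) hcD.1
            rw [dist_comm]; linarith
        · have hle : punct DX (φ y) ≤ dist (φ y) x :=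
            punct_le hxD (Ne.symm hyx)
          rw [dist_comm] at hle
          have hnn : (0:ℝ) ≤ dist x (φ y) := dist_nonneg
          have : dist x (φ y) = 0 := by linarith
          exact hyx (by rwa [dist_comm, dist_eq_zero] at this)
    · obtain ⟨ε₄, hε₄, hball₄⟩ := Metric.isOpen_iff.mp (isOpen_compl_iff.mpr hDXc) x hxD
      have hεpos : (0 : ℝ) < min ε₁ ε₄ := lt_min hε₁ hε₄
      obtain ⟨n, hn⟩ := exists_nat_one_div_lt hεpos
      obtain ⟨c, hc, hball⟩ := mem_iUnion₂.mp (cUU_cover φ DY F E (rXn n) (rYn n) (hxU n))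
      have hdx : dist x c < rXn n c := Metric.mem_ball.mp hball
      rw [hrXnv] at hdx
      have hd1 : dist x c < 1 / ((n : ℝ) + 1) / 3 := by
        have := min_le_left (1 / ((n : ℝ) + 1)) (punct DX c); linarith
      have h3 : (0:ℝ) < 1 / ((n : ℝ) + 1) := by positivity
      rcases hc with hcF | ⟨y, hyO, rfl⟩
      · refine hball₁ (Metric.mem_ball.mpr ?_) hcF
        rw [dist_comm]
        have := min_le_left ε₁ ε₄
        linarith
      · have hcD : φ y ∈ DX := himg ▸ mem_image_of_mem φ hyO.2
        refine hball₄ (Metric.mem_ball.mpr ?_) hcD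
        rw [dist_comm]
        have := min_le_right ε₁ ε₄
        linarith

end Main

section Assemble

lemma isoProp_of_discrete {α : Type*} [MetricSpace α] {D : Set α}
    (h : @DiscreteTopology D (TopologicalSpace.induced (Subtype.val : D → α) inferInstance)) :
    IsoProp D := by
  haveI h' : DiscreteTopology D := h
  intro d hd
  have h1 : {(⟨d, hd⟩ : D)} ∈ nhds (⟨d, hd⟩ : D) := by
    rw [discreteTopology_iff_nhds.mp h']
    exact Filter.mem_pure.mpr rfl
  rw [nhds_subtype_eq_comap] at h1
  obtain ⟨U, hU, hsub⟩ := Filter.mem_comap.mp h1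
  obtain ⟨ε, hε, hb⟩ := Metric.mem_nhds_iff.mp hU
  refine ⟨ε, hε, fun x hx hdist => ?_⟩
  have hm : (⟨x, hx⟩ : D) ∈ (Subtype.val : D → α) ⁻¹' U := hb (Metric.mem_ball.mpr hdist)
  have := hsub hm
  exact congrArg Subtype.val (Set.mem_singleton_iff.mp this)

end Assemble


theorem statement17' {X : Type u} {Y : Type v} (tX : TopologicalSpace X) (tY : TopologicalSpace Y)
    (hmX : @TopologicalSpace.MetrizableSpace X tX)
    (hmY : @TopologicalSpace.MetrizableSpace Y tY)
    (DX : Set X) (DY : Set Y) (φ : Y → X)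
    (hDX : ClosedDiscrete tX DX) (hDY : ClosedDiscrete tY DY)
    (hinj : Function.Injective φ)
    (himg : φ '' DYᶜ = DX) :
    @NormalSpace X (sigmaTop tX tY φ) ∧
      ∀ F : Set X, @IsClosed X (sigmaTop tX tY φ) F →
        ∃ G : ℕ → Set X, (∀ n, (sigmaTop tX tY φ).IsOpen (G n)) ∧ F = ⋂ n, G n := by
  classical
  obtain ⟨mX, rfl⟩ := (⟨@TopologicalSpace.metrizableSpaceMetric X tX hmX, rfl⟩ :
    ∃ m : MetricSpace X, m.toUniformSpace.toTopologicalSpace = tX)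
  obtain ⟨mY, rfl⟩ := (⟨@TopologicalSpace.metrizableSpaceMetric Y tY hmY, rfl⟩ :
    ∃ m : MetricSpace Y, m.toUniformSpace.toTopologicalSpace = tY)
  letI := mX
  letI := mY
  have hDXc : IsClosed DX := hDX.1
  have hDYc : IsClosed DY := hDY.1
  have hDXi : IsoProp DX := isoProp_of_discrete hDX.2
  have hDYi : IsoProp DY := isoProp_of_discrete hDY.2
  constructor
  · refine @NormalSpace.mk X (sigmaTop _ _ φ) ?_
    intro s t hs ht hst
    have hs1 : IsOpen sᶜ ∧ IsOpen (φ ⁻¹' sᶜ) := hs.isOpen_compl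
    have ht1 : IsOpen tᶜ ∧ IsOpen (φ ⁻¹' tᶜ) := ht.isOpen_compl
    have hsc : IsClosed s := isOpen_compl_iff.mp hs1.1
    have htc : IsClosed t := isOpen_compl_iff.mp ht1.1
    have hsp : IsClosed (φ ⁻¹' s) := by
      rw [← isOpen_compl_iff, ← preimage_compl]; exact hs1.2
    have htp : IsClosed (φ ⁻¹' t) := by
      rw [← isOpen_compl_iff, ← preimage_compl]; exact ht1.2
    obtain ⟨A, W, hA, hW, hsA, htW, hAW⟩ :=
      normal_part DX DY φ hDXc hDXi hDYc hDYi hinj himg s t hsc htc hsp htp hst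
    exact ⟨A, W, ⟨hA.1, hA.2⟩, ⟨hW.1, hW.2⟩, hsA, htW, hAW⟩
  · intro F hF
    have h1 : IsOpen Fᶜ ∧ IsOpen (φ ⁻¹' Fᶜ) := hF.isOpen_compl
    have hFc : IsClosed F := isOpen_compl_iff.mp h1.1
    have hFp : IsClosed (φ ⁻¹' F) := by
      rw [← isOpen_compl_iff, ← preimage_compl]; exact h1.2
    obtain ⟨G, hG, hFeq⟩ := gdelta_part DX DY φ hDXc hDXi hDYc hDYi hinj himg F hFc hFp
    exact ⟨G, fun n => ⟨(hG n).1, (hG n).2⟩, hFeq⟩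

theorem statement17 {X : Type u} {Y : Type v} (tX : TopologicalSpace X) (tY : TopologicalSpace Y)
    (hmX : @TopologicalSpace.MetrizableSpace X tX)
    (hmY : @TopologicalSpace.MetrizableSpace Y tY)
    (hpX : @PerfectlyNormalSpace X tX) (hpY : @PerfectlyNormalSpace Y tY)
    (hcX : CollectionwiseNormal tX) (hcY : CollectionwiseNormal tY)
    (DX : Set X) (DY : Set Y) (φ : Y → X)
    (hDX : ClosedDiscrete tX DX) (hDY : ClosedDiscrete tY DY)
    (hinj : Function.Injective φ)
    (himg : φ '' DYᶜ = DX)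
    (hdense : @Dense X tX (Set.range φ)) :
    @NormalSpace X (sigmaTop tX tY φ) ∧
      ∀ F : Set X, @IsClosed X (sigmaTop tX tY φ) F →
        ∃ G : ℕ → Set X, (∀ n, (sigmaTop tX tY φ).IsOpen (G n)) ∧ F = ⋂ n, G n := by
  exact statement17' tX tY hmX hmY DX DY φ hDX hDY hinj himg
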